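/- arXiv:1902.04715 — 12 statements merged into one kernel-verified Lean document; each statement's English description precedes it below -/
import Mathlib

section
/- Let f = (f₁,…,fₙ) be a polynomial vector field on ℝⁿ whose components all have total degree at most 2, let P be an affine polynomial (total degree at most 1) and C a polynomial such that ∑ᵢ fᵢ·∂P/∂xᵢ = C·P, and let h be a real number. Then for every point x ∈ ℝⁿ such that the matrix A(x) = I − (h/2)·Df(x) is invertible (where Df(x) is the Jacobian matrix of f at x) and P(x) = 0, the Kahan update Φ(x) = x + h·A(x)⁻¹·f(x) satisfies P(Φ(x)) = 0. In other words, the Kahan–Hirota–Kimura discretization preserves every affine Darboux polynomial of a quadratic ODE. -/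
open MvPolynomial Matrix

lemma aux_deg_one_single {n : ℕ} (m : Fin n →₀ ℕ) (hm : ∑ j ∈ m.support, m j = 1) :
    ∃ i, m = Finsupp.single i 1 := by
  obtain ⟨i, hi⟩ : m.support.Nonempty := by
    by_contra hs
    simp [Finset.not_nonempty_iff_eq_empty.mp hs] at hm
  refine ⟨i, ?_⟩
  have h1 : 1 ≤ m i := Finsupp.mem_support_iff.mp hi |>.bot_lt
  have h2 : m i + ∑ j ∈ m.support.erase i, m j = 1 := by
    rw [Finset.add_sum_erase _ _ hi]; exact hm
  have hmi : m i = 1 := le_antisymm (by omega) h1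
  have hrest : ∑ j ∈ m.support.erase i, m j = 0 := by omega
  ext j
  rcases eq_or_ne j i with rfl | hj
  · simp [hmi]
  · rw [Finsupp.single_eq_of_ne' (Ne.symm hj)]
    by_contra hmj
    have hjs : j ∈ m.support.erase i := Finset.mem_erase.mpr ⟨hj, Finsupp.mem_support_iff.mpr hmj⟩
    exact hmj (Finset.sum_eq_zero_iff.mp hrest j hjs)

lemma aux_affine_decomp {n : ℕ} (P : MvPolynomial (Fin n) ℝ) (hP : P.totalDegree ≤ 1) :
    P = C (coeff 0 P) + ∑ i, C (coeff (Finsupp.single i 1) P) * X i := by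
  ext m
  rw [coeff_add, coeff_C]
  have hsum : coeff m (∑ i, C (coeff (Finsupp.single i 1) P) * X i)
      = ∑ i, coeff (Finsupp.single i 1) P * (if Finsupp.single i 1 = m then 1 else 0) := by
    rw [coeff_sum]; simp [coeff_C_mul, coeff_X']
  rw [hsum]
  rcases eq_or_ne m 0 with rfl | hm0
  · simp
  rcases eq_or_ne (∑ j ∈ m.support, m j) 1 with hd1 | hd1
  · obtain ⟨i, rfl⟩ := aux_deg_one_single m hd1
    rw [if_neg (by simpa using (Ne.symm hm0)), Finset.sum_eq_single i
      (by intro j _ hj; rw [if_neg, mul_zero]; simp [Finsupp.single_eq_single_iff, hj])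
      (by simp)]
    simp
  · have hd2 : 1 < ∑ j ∈ m.support, m j := by
      rcases Nat.lt_or_ge (∑ j ∈ m.support, m j) 2 with hlt | hge
      · interval_cases hd : (∑ j ∈ m.support, m j)
        · refine absurd (Finsupp.ext fun j => ?_) hm0
          by_contra hj
          exact hj (Finset.sum_eq_zero_iff.mp hd j (Finsupp.mem_support_iff.mpr hj))
        · exact absurd rfl hd1
      · omega
    rw [coeff_eq_zero_of_totalDegree_lt (lt_of_le_of_lt hP hd2),
      if_neg (Ne.symm hm0), Finset.sum_eq_zero, add_zero]
    intro i _
    rw [if_neg, mul_zero]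
    intro hsm
    rw [← hsm] at hd2
    simp [Finsupp.support_single_ne_zero i one_ne_zero] at hd2

/-- The Kahan–Hirota–Kimura discretization preserves every affine Darboux
polynomial of a quadratic ODE. -/
theorem kahan_preserves_affine_darboux_polynomials
    (n : ℕ) (f : Fin n → MvPolynomial (Fin n) ℝ)
    (hf : ∀ i, (f i).totalDegree ≤ 2)
    (P C : MvPolynomial (Fin n) ℝ) (hPaff : P.totalDegree ≤ 1)
    (hDarb : ∑ i, f i * pderiv i P = C * P)
    (h : ℝ) (x : Fin n → ℝ)
    (A : Matrix (Fin n) (Fin n) ℝ)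
    (hA : A = 1 - (h / 2) • Matrix.of fun i j => eval x (pderiv j (f i)))
    (hAinv : IsUnit A.det)
    (hx : eval x P = 0) :
    eval (x + h • (A⁻¹ *ᵥ fun i => eval x (f i))) P = 0 := by
  classical
  set F : Fin n → ℝ := fun i => eval x (f i) with hF
  set g : Fin n → ℝ := fun i => coeff (Finsupp.single i 1) P with hgdef
  have hPdec := aux_affine_decomp P hPaff
  have hpd : ∀ k, pderiv k P = MvPolynomial.C (g k) := by
    intro k
    conv_lhs => rw [hPdec]
    simp [pderiv_X, Pi.single_apply, Finset.sum_ite_eq', hgdef]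
  have heval : ∀ y : Fin n → ℝ, eval y P = coeff 0 P + ∑ i, g i * y i := by
    intro y
    conv_lhs => rw [hPdec]
    simp [hgdef]
  -- Darboux identity evaluated at x
  have hgF : ∑ i, g i * F i = 0 := by
    have h0 := congrArg (eval x) hDarb
    simp only [eval_sum, eval_mul, hpd, eval_C, hx, mul_zero] at h0
    simpa [hF, mul_comm] using h0
  set c : ℝ := eval x C with hc
  have hJ : ∀ j, ∑ i, eval x (pderiv j (f i)) * g i = c * g j := by
    intro j
    have h0 := congrArg (fun q => eval x (pderiv j q)) hDarb
    simp only [map_sum, pderiv_mul, hpd, pderiv_C, mul_zero, add_zero, eval_sum, eval_add,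
      eval_mul, eval_C, hx, zero_add] at h0
    simpa using h0
  set J : Matrix (Fin n) (Fin n) ℝ := Matrix.of (fun i j => eval x (pderiv j (f i))) with hJdef
  have hgJ : g ᵥ* J = c • g := by
    funext j
    simpa [Matrix.vecMul, dotProduct, hJdef, mul_comm] using hJ j
  have hgA : g ᵥ* A = (1 - h * c / 2) • g := by
    have hs : g ᵥ* ((h / 2) • J) = (h / 2) • (g ᵥ* J) := by
      funext j
      simp only [Matrix.vecMul, dotProduct, Matrix.smul_apply, Pi.smul_apply, smul_eq_mul, Finset.mul_sum]
      exact Finset.sum_congr rfl fun i _ => by ring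
    rw [hA, Matrix.vecMul_sub, Matrix.vecMul_one, hs, hgJ]
    funext i
    simp only [Pi.sub_apply, Pi.smul_apply, smul_eq_mul]
    ring
  set lam : ℝ := 1 - h * c / 2 with hlamdef
  have hginv : lam • (g ᵥ* A⁻¹) = g := by
    have h1 : (lam • g) ᵥ* A⁻¹ = g := by
      rw [← hgA, Matrix.vecMul_vecMul, Matrix.mul_nonsing_inv A hAinv, Matrix.vecMul_one]
    have h2 : (lam • g) ᵥ* A⁻¹ = lam • (g ᵥ* A⁻¹) := by
      funext j
      simp [Matrix.vecMul, dotProduct, Finset.mul_sum, mul_assoc]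
    rw [← h2, h1]
  have hkey : ∑ i, g i * (A⁻¹ *ᵥ F) i = 0 := by
    rcases eq_or_ne lam 0 with hlam | hlam
    · have hg0 : g = 0 := by rw [← hginv, hlam, zero_smul]
      have : ∀ i, g i = 0 := fun i => congrFun hg0 i
      simp [this]
    · have hAg : g ᵥ* A⁻¹ = lam⁻¹ • g := by
        have h3 := congrArg (fun v => lam⁻¹ • v) hginv
        simpa [smul_smul, inv_mul_cancel₀ hlam] using h3
      calc ∑ i, g i * (A⁻¹ *ᵥ F) i = g ⬝ᵥ (A⁻¹ *ᵥ F) := rfl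
        _ = (g ᵥ* A⁻¹) ⬝ᵥ F := Matrix.dotProduct_mulVec g A⁻¹ F
        _ = lam⁻¹ * ∑ i, g i * F i := by
            rw [hAg]
            simp [dotProduct, Finset.mul_sum, mul_assoc]
        _ = 0 := by rw [hgF, mul_zero]
  rw [heval]
  have hx' := heval x
  rw [hx] at hx'
  have hsplit : ∑ i, g i * (x + h • (A⁻¹ *ᵥ F)) i
      = ∑ i, g i * x i + h * ∑ i, g i * (A⁻¹ *ᵥ F) i := by
    rw [Finset.mul_sum, ← Finset.sum_add_distrib]
    refine Finset.sum_congr rfl fun i _ => ?_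
    simp only [Pi.add_apply, Pi.smul_apply, smul_eq_mul]
    ring
  rw [hsplit, hkey, mul_zero, add_zero]
  linarith
end

section
/- Let f = (f₁,…,fₙ) be a polynomial vector field on ℝⁿ and let P₁, P₂, C be polynomials with ∑ᵢ fᵢ·∂P₁/∂xᵢ = C·P₁ and ∑ᵢ fᵢ·∂P₂/∂xᵢ = C·P₂ (two Darboux polynomials with the same cofactor). Then for any differentiable curve x : I → ℝⁿ on an interval I satisfying x'(t) = f(x(t)) for all t ∈ I and with P₂(x(t)) ≠ 0 for all t ∈ I, the function t ↦ P₁(x(t))/P₂(x(t)) is constant on I; i.e. the ratio P₁/P₂ is a rational first integral of the ODE ẋ = f(x). -/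
open MvPolynomial

lemma hasDerivAt_eval_comp {n : ℕ} (x : ℝ → Fin n → ℝ) (x' : Fin n → ℝ) (t : ℝ)
    (hx : HasDerivAt x x' t) (P : MvPolynomial (Fin n) ℝ) :
    HasDerivAt (fun s => eval (x s) P) (∑ i, x' i * eval (x t) (pderiv i P)) t := by
  induction P using MvPolynomial.induction_on with
  | C a => simpa using hasDerivAt_const t a
  | add p q hp hq =>
      have := hp.add hq
      simp only [map_add, ← Finset.sum_add_distrib, ← mul_add] at this ⊢
      exact this
  | mul_X p i hp =>
      have hxi : HasDerivAt (fun s => x s i) (x' i) t := by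
        exact ((ContinuousLinearMap.proj (R := ℝ) (φ := fun _ : Fin n => ℝ) i).hasFDerivAt.comp_hasDerivAt t hx)
      have := hp.mul hxi
      have key : ∑ j, x' j * eval (x t) (pderiv j (p * X i))
          = (∑ j, x' j * eval (x t) (pderiv j p)) * x t i + eval (x t) p * x' i := by
        rw [Finset.sum_congr rfl (fun j (_ : j ∈ Finset.univ) => by
          rw [pderiv_mul, map_add, map_mul, map_mul, eval_X, pderiv_X]), Finset.sum_congr rfl
          (fun j (_ : j ∈ Finset.univ) => mul_add (x' j) _ _), Finset.sum_add_distrib,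
          Finset.sum_mul]
        congr 1
        · exact Finset.sum_congr rfl fun j _ => by ring
        · rw [Finset.sum_eq_single i]
          · simp [mul_comm]
          · intro j _ hj
            rw [Pi.single_eq_of_ne hj.symm]; simp
          · simp
      simp only [map_mul, eval_X]
      rw [key]
      exact this

/-- The ratio of two Darboux polynomials of a polynomial vector field with the
same cofactor is a rational first integral: it is constant along any solution
curve on which the denominator does not vanish. -/
theorem ratio_of_darboux_polynomials_is_first_integral
    (n : ℕ) (f : Fin n → MvPolynomial (Fin n) ℝ)
    (P₁ P₂ C : MvPolynomial (Fin n) ℝ)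
    (h1 : ∑ i, f i * pderiv i P₁ = C * P₁)
    (h2 : ∑ i, f i * pderiv i P₂ = C * P₂)
    (I : Set ℝ) (hI : I.OrdConnected)
    (x : ℝ → Fin n → ℝ)
    (hx : ∀ t ∈ I, HasDerivAt x (fun i => eval (x t) (f i)) t)
    (hP₂ : ∀ t ∈ I, eval (x t) P₂ ≠ 0) :
    ∀ s ∈ I, ∀ t ∈ I,
      eval (x s) P₁ / eval (x s) P₂ = eval (x t) P₁ / eval (x t) P₂ := by
  have hconv : Convex ℝ I := convex_iff_ordConnected.mpr hI
  set g : ℝ → ℝ := fun u => eval (x u) P₁ / eval (x u) P₂ with hg_def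
  have hg : ∀ u ∈ I, HasDerivAt g 0 u := by
    intro u hu
    have keyP : ∀ P : MvPolynomial (Fin n) ℝ, (∑ i, f i * pderiv i P = C * P) →
        HasDerivAt (fun v => eval (x v) P) (eval (x u) C * eval (x u) P) u := by
      intro P hP
      have h := hasDerivAt_eval_comp x _ u (hx u hu) P
      have hsum : ∑ i, eval (x u) (f i) * eval (x u) (pderiv i P)
          = eval (x u) C * eval (x u) P := by
        rw [← map_mul, ← hP, map_sum]
        exact Finset.sum_congr rfl fun i _ => (map_mul _ _ _).symm
      rwa [hsum] at h
    have hp := keyP P₁ h1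
    have hq := keyP P₂ h2
    have hd := hp.div hq (hP₂ u hu)
    have hzero : (eval (x u) C * eval (x u) P₁ * eval (x u) P₂
        - eval (x u) P₁ * (eval (x u) C * eval (x u) P₂)) / (eval (x u) P₂) ^ 2 = 0 := by
      rw [show (eval (x u) C * eval (x u) P₁ * eval (x u) P₂
        - eval (x u) P₁ * (eval (x u) C * eval (x u) P₂)) = 0 from by ring, zero_div]
    rwa [hzero] at hd
  intro s hs t ht
  have hsmul : ContinuousLinearMap.toSpanSingleton ℝ (0 : ℝ) = 0 := by ext; simp
  have hbd := hconv.norm_image_sub_le_of_norm_hasFDerivWithin_le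
    (f := g) (f' := fun _ => (0 : ℝ →L[ℝ] ℝ)) (C := 0)
    (fun u hu => by
      have := ((hg u hu).hasDerivWithinAt (s := I)).hasFDerivWithinAt
      rwa [hsmul] at this)
    (fun u _ => by simp) hs ht
  have : ‖g t - g s‖ ≤ 0 := by simpa using hbd
  have : g t = g s := by
    have := norm_le_zero_iff.mp this
    linarith [sub_eq_zero.mp this]
  simpa [hg_def] using this.symm
end

section
/- Let f = (f₁,…,fₙ) be a polynomial vector field on ℝⁿ and let P, C be polynomials with ∑ᵢ fᵢ·∂P/∂xᵢ = C·P. Let x : I → ℝⁿ be a differentiable curve on an interval I containing 0 with x'(t) = f(x(t)) for all t ∈ I. If P(x(0)) = 0, then P(x(t)) = 0 for all t ∈ I; i.e. the zero set of a Darboux polynomial is an invariant set of the flow. -/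
open MvPolynomial

/-- The zero set of a Darboux polynomial of a polynomial vector field is an
invariant set of the flow: if `P` vanishes at the initial point of a solution
curve, it vanishes along the whole curve. -/
theorem darboux_polynomial_zero_set_invariant
    (n : ℕ) (f : Fin n → MvPolynomial (Fin n) ℝ)
    (P C : MvPolynomial (Fin n) ℝ)
    (hDarb : ∑ i, f i * pderiv i P = C * P)
    (I : Set ℝ) (hI : I.OrdConnected) (h0 : (0 : ℝ) ∈ I)
    (x : ℝ → Fin n → ℝ)
    (hx : ∀ t ∈ I, HasDerivAt x (fun i => eval (x t) (f i)) t)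
    (hinit : eval (x 0) P = 0) :
    ∀ t ∈ I, eval (x t) P = 0 := by
  set y : ℝ → ℝ := fun s => eval (x s) P with hy
  set c : ℝ → ℝ := fun s => eval (x s) C with hc
  have hyder : ∀ s ∈ I, HasDerivAt y (c s * y s) s := by
    intro s hs
    have h := hasDerivAt_eval_comp x _ s (hx s hs) P
    convert h using 1
    have : (∑ i, eval (x s) (f i) * eval (x s) (pderiv i P))
        = eval (x s) (∑ i, f i * pderiv i P) := by
      rw [map_sum]
      exact Finset.sum_congr rfl fun i _ => (eval_mul ..).symm
    rw [hy, hc]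
    simp only
    rw [← eval_mul, ← hDarb, ← this]
  have hccont : ∀ s ∈ I, ContinuousAt c s := fun s hs =>
    (hasDerivAt_eval_comp x _ s (hx s hs) C).continuousAt
  have hycont : ∀ s ∈ I, ContinuousAt y s := fun s hs => (hyder s hs).continuousAt
  intro t ht
  rcases lt_trichotomy t 0 with h | h | h
  · -- t < 0, use Icc t 0
    have hsub : Set.Icc t 0 ⊆ I := hI.out ht h0
    obtain ⟨K, hK⟩ := (isCompact_Icc (a := t) (b := 0)).exists_bound_of_continuousOn
      (fun s hs => (hccont s (hsub hs)).continuousWithinAt)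
    set Knn : NNReal := ⟨max K 0, le_max_right _ _⟩ with hKnn
    set v : ℝ → ℝ → ℝ := fun s z => (if s ∈ Set.Icc t 0 then c s else 0) * z with hv
    have hlip : ∀ s, LipschitzOnWith Knn (v s) Set.univ := by
      intro s
      refine LipschitzWith.lipschitzOnWith ?_
      refine LipschitzWith.of_dist_le_mul fun z w => ?_
      simp only [hv, Real.dist_eq, ← mul_sub, abs_mul]
      refine mul_le_mul_of_nonneg_right ?_ (abs_nonneg _)
      by_cases hs : s ∈ Set.Icc t 0
      · simp only [hs, if_pos]
        exact le_trans (hK s hs) (le_max_left K 0)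
      · simp [hs, hKnn]
        exact le_max_right K 0
    have hEq := ODE_solution_unique_of_mem_Icc_left (v := v) (s := fun _ => Set.univ)
      (K := Knn) (fun s _ => hlip s)
      (f := y) (g := fun _ => 0) (a := t) (b := 0)
      (fun s hs => (hycont s (hsub hs)).continuousWithinAt)
      (fun s hs => by
        have hs' : s ∈ Set.Icc t 0 := ⟨hs.1.le, hs.2⟩
        have := (hyder s (hsub hs')).hasDerivWithinAt (s := Set.Iic s)
        simpa [hv, hs'.1, hs'.2] using this)
      (fun _ _ => trivial)
      continuousOn_const
      (fun s hs => by simpa [hv] using (hasDerivWithinAt_const s (Set.Iic s) (0:ℝ)))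
      (fun _ _ => trivial)
      (by simpa using hinit)
    exact hEq (Set.left_mem_Icc.2 h.le)
  · simpa [h] using hinit
  · -- t > 0, use Icc 0 t
    have hsub : Set.Icc 0 t ⊆ I := hI.out h0 ht
    obtain ⟨K, hK⟩ := (isCompact_Icc (a := 0) (b := t)).exists_bound_of_continuousOn
      (fun s hs => (hccont s (hsub hs)).continuousWithinAt)
    set Knn : NNReal := ⟨max K 0, le_max_right _ _⟩ with hKnn
    set v : ℝ → ℝ → ℝ := fun s z => (if s ∈ Set.Icc 0 t then c s else 0) * z with hv
    have hlip : ∀ s, LipschitzOnWith Knn (v s) Set.univ := by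
      intro s
      refine LipschitzWith.lipschitzOnWith ?_
      refine LipschitzWith.of_dist_le_mul fun z w => ?_
      simp only [hv, Real.dist_eq, ← mul_sub, abs_mul]
      refine mul_le_mul_of_nonneg_right ?_ (abs_nonneg _)
      by_cases hs : s ∈ Set.Icc 0 t
      · simp only [hs, if_pos]
        exact le_trans (hK s hs) (le_max_left K 0)
      · simp [hs, hKnn]
        exact le_max_right K 0
    have hEq := ODE_solution_unique_of_mem_Icc_right (v := v) (s := fun _ => Set.univ)
      (K := Knn) (fun s _ => hlip s)
      (f := y) (g := fun _ => 0) (a := 0) (b := t)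
      (fun s hs => (hycont s (hsub hs)).continuousWithinAt)
      (fun s hs => by
        have hs' : s ∈ Set.Icc 0 t := ⟨hs.1, hs.2.le⟩
        have := (hyder s (hsub hs')).hasDerivWithinAt (s := Set.Ici s)
        simpa [hv, hs'.1, hs'.2] using this)
      (fun _ _ => trivial)
      continuousOn_const
      (fun s hs => by simpa [hv] using (hasDerivWithinAt_const s (Set.Ici s) (0:ℝ)))
      (fun _ _ => trivial)
      (by simpa using hinit)
    exact hEq (Set.right_mem_Icc.2 h.le)
end

section
/- Let U ⊆ ℝⁿ be an open set, let φ : U → ℝⁿ be an injective map that is differentiable on U with φ(U) ⊆ U, and let P : ℝⁿ → ℝ be a continuous function with P(x) > 0 for all x ∈ U. Suppose P(φ(x)) = det(Dφ(x))·P(x) for all x ∈ U, where Dφ(x) denotes the (Fréchet) derivative of φ at x. Then the measure with density 1/P with respect to Lebesgue measure is preserved by φ: for every measurable set s ⊆ U, ∫_{φ(s)} 1/P(x) dx = ∫_s 1/P(x) dx. In other words, a discrete Darboux polynomial whose cofactor equals the Jacobian determinant of the map is the inverse density of a preserved measure. -/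
open MeasureTheory

/-- A discrete Darboux "polynomial" whose cofactor equals the Jacobian
determinant of the map is the inverse density of a preserved measure:
if `P ∘ φ = det(Dφ) · P` on an open set `U`, then the measure with density
`1/P` with respect to Lebesgue measure is preserved by `φ`. -/
theorem darboux_with_jacobian_cofactor_gives_preserved_measure
    (n : ℕ) (U : Set (Fin n → ℝ)) (hU : IsOpen U)
    (φ : (Fin n → ℝ) → (Fin n → ℝ))
    (hinj : Set.InjOn φ U) (hmaps : Set.MapsTo φ U U)
    (φ' : (Fin n → ℝ) → ((Fin n → ℝ) →L[ℝ] (Fin n → ℝ)))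
    (hdiff : ∀ x ∈ U, HasFDerivAt φ (φ' x) x)
    (P : (Fin n → ℝ) → ℝ)
    (hPcont : Continuous P) (hPpos : ∀ x ∈ U, 0 < P x)
    (hDarb : ∀ x ∈ U, P (φ x) = (φ' x).det * P x)
    (s : Set (Fin n → ℝ)) (hs : MeasurableSet s) (hsU : s ⊆ U) :
    ∫⁻ x in φ '' s, ENNReal.ofReal (1 / P x) = ∫⁻ x in s, ENNReal.ofReal (1 / P x) := by
  rw [lintegral_image_eq_lintegral_abs_det_fderiv_mul volume hs
      (fun x hx => ((hdiff x (hsU hx)).hasFDerivWithinAt)) (hinj.mono hsU)]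
  refine setLIntegral_congr_fun hs (fun x hx => ?_)
  have hxU := hsU hx
  have hPx := hPpos x hxU
  have hPfx := hPpos (φ x) (hmaps hxU)
  have hD := hDarb x hxU
  have hdet : 0 < (φ' x).det := by
    have h : 0 < (φ' x).det * P x := hD ▸ hPfx
    nlinarith
  rw [abs_of_pos hdet, ← ENNReal.ofReal_mul hdet.le, hD]
  congr 1
  field_simp
end

section
/- Let h be a real number and for (x,y) ∈ ℝ² define D(x,y) = 1 − (h²/4)(9 − 12x − 36y + 4x² + 12xy + 36y²), x' = x(1 + h(x+6y−3) + (h²/4)(9−6x))/D(x,y) and y' = y(1 + h(3−2x−3y) + (9h²/4)(1−2y))/D(x,y). Then for all (x,y) with D(x,y) ≠ 0 and D(x',y') ≠ 0, x'y'(x'+3y'−3)/D(x',y') = xy(x+3y−3)/D(x,y); i.e. the rational function Ĩ(x,y) = xy(x+3y−3)/D(x,y) is a first integral of the Kahan map. -/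
set_option maxHeartbeats 4000000


/-- The rational function `Ĩ(x,y) = x y (x + 3y − 3)/D(x,y)` is a first
integral of the Kahan map of the ODE `ẋ = x(x+6y−3)`, `ẏ = y(−3y−2x+3)`. -/
theorem kahan_map_first_integral_2d
    (h x y : ℝ) (D : ℝ → ℝ → ℝ)
    (hD : ∀ a b : ℝ, D a b =
      1 - h ^ 2 / 4 * (9 - 12 * a - 36 * b + 4 * a ^ 2 + 12 * a * b + 36 * b ^ 2))
    (x' y' : ℝ)
    (hx' : x' = x * (1 + h * (x + 6 * y - 3) + h ^ 2 / 4 * (9 - 6 * x)) / D x y)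
    (hy' : y' = y * (1 + h * (3 - 2 * x - 3 * y) + 9 * h ^ 2 / 4 * (1 - 2 * y)) / D x y)
    (hD₁ : D x y ≠ 0) (hD₂ : D x' y' ≠ 0) :
    x' * y' * (x' + 3 * y' - 3) / D x' y' = x * y * (x + 3 * y - 3) / D x y := by
  set E := D x y with hE
  set A := x * (1 + h * (x + 6 * y - 3) + h ^ 2 / 4 * (9 - 6 * x)) with hA
  set B := y * (1 + h * (3 - 2 * x - 3 * y) + 9 * h ^ 2 / 4 * (1 - 2 * y)) with hB
  set P := E ^ 2 - h ^ 2 / 4 *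
      (9 * E ^ 2 - 12 * A * E - 36 * B * E + 4 * A ^ 2 + 12 * A * B + 36 * B ^ 2) with hP
  have hDP : D x' y' = P / E ^ 2 := by
    rw [hD x' y', hx', hy', hP]
    field_simp
  have hPne : P ≠ 0 := fun h0 => hD₂ (by rw [hDP, h0, zero_div])
  have key : A * B * (A + 3 * B - 3 * E) = x * y * (x + 3 * y - 3) * P := by
    rw [hP, hA, hB, hE, hD x y]; ring
  rw [hDP, hx', hy']
  have step : A / E * (B / E) * (A / E + 3 * (B / E) - 3) / (P / E ^ 2)
      = A * B * (A + 3 * B - 3 * E) / (E * P) := by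
    field_simp
  rw [step, key, mul_comm E P, ← div_div, mul_div_assoc,
    div_self hPne, mul_one]
end

section
/- Let h be a real number, let D(x,y) = 1 − (h²/4)(9 − 12x − 36y + 4x² + 12xy + 36y²), and let φ(x,y) = (x',y') with x' = x(1 + h(x+6y−3) + (h²/4)(9−6x))/D(x,y) and y' = y(1 + h(3−2x−3y) + (9h²/4)(1−2y))/D(x,y). Then for all (x,y) with D(x,y) ≠ 0, the Jacobian determinant of φ satisfies det(Dφ(x,y))·D(x,y) = D(φ(x,y)); consequently the map φ preserves the measure dx dy / D(x,y). -/
set_option maxHeartbeats 10000000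

lemma clm_det_fin_two (L : (ℝ × ℝ) →L[ℝ] ℝ × ℝ) :
    L.det = (L (1, 0)).1 * (L (0, 1)).2 - (L (1, 0)).2 * (L (0, 1)).1 := by
  have : L.det = LinearMap.det (L : (ℝ × ℝ) →ₗ[ℝ] ℝ × ℝ) := rfl
  rw [this, ← LinearMap.det_toMatrix (Module.Basis.finTwoProd ℝ), Matrix.det_fin_two]
  simp [LinearMap.toMatrix_apply, Module.Basis.coe_finTwoProd_repr, Module.Basis.finTwoProd_zero,
    Module.Basis.finTwoProd_one]
  ring

/-- The Kahan map `φ` of the ODE `ẋ = x(x+6y−3)`, `ẏ = y(−3y−2x+3)` satisfies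
`det(Dφ(x,y)) · D(x,y) = D(φ(x,y))` wherever `D(x,y) ≠ 0`; consequently `φ`
preserves the measure `dx dy / D(x,y)`. -/
theorem kahan_map_preserves_measure_2d
    (h : ℝ) (D : ℝ → ℝ → ℝ)
    (hD : ∀ a b : ℝ, D a b =
      1 - h ^ 2 / 4 * (9 - 12 * a - 36 * b + 4 * a ^ 2 + 12 * a * b + 36 * b ^ 2))
    (φ : ℝ × ℝ → ℝ × ℝ)
    (hφ : ∀ p : ℝ × ℝ, φ p =
      (p.1 * (1 + h * (p.1 + 6 * p.2 - 3) + h ^ 2 / 4 * (9 - 6 * p.1)) / D p.1 p.2,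
       p.2 * (1 + h * (3 - 2 * p.1 - 3 * p.2) + 9 * h ^ 2 / 4 * (1 - 2 * p.2)) / D p.1 p.2))
    (p : ℝ × ℝ) (hDp : D p.1 p.2 ≠ 0) :
    (fderiv ℝ φ p).det * D p.1 p.2 = D (φ p).1 (φ p).2 := by
  have hfx : HasFDerivAt (fun q : ℝ × ℝ => q.1) (ContinuousLinearMap.fst ℝ ℝ ℝ) p :=
    hasFDerivAt_fst
  have hfy : HasFDerivAt (fun q : ℝ × ℝ => q.2) (ContinuousLinearMap.snd ℝ ℝ ℝ) p :=
    hasFDerivAt_snd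
  -- denominator
  have hden := (hasFDerivAt_const (1:ℝ) p).sub
    (((((((hasFDerivAt_const (9:ℝ) p).sub (hfx.const_mul 12)).sub
      (hfy.const_mul 36)).add (((hasDerivAt_pow 2 p.1).comp_hasFDerivAt p hfx).const_mul 4)).add
      ((hfx.const_mul 12).mul hfy)).add (((hasDerivAt_pow 2 p.2).comp_hasFDerivAt p hfy).const_mul 36)).const_mul (h^2/4))
  have hdval : (1 - h ^ 2 / 4 * (9 - 12 * p.1 - 36 * p.2 + 4 * p.1 ^ 2 + 12 * p.1 * p.2
      + 36 * p.2 ^ 2)) ≠ 0 := by rw [← hD]; exact hDp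
  have hinv := (hasFDerivAt_inv hdval).comp p hden
  -- numerators
  have hn1 := hfx.mul (((((hfx.add (hfy.const_mul 6)).sub_const 3).const_mul h).const_add 1).add
      (((hfx.const_mul 6).const_sub 9).const_mul (h^2/4)))
  have hn2 := hfy.mul ((((((hfx.const_mul 2).const_sub 3).sub
      (hfy.const_mul 3)).const_mul h).const_add 1).add
      (((hfy.const_mul 2).const_sub 1).const_mul (9*h^2/4)))
  have K := HasFDerivAt.prodMk (hn1.mul hinv) (hn2.mul hinv)
  have H : HasFDerivAt φ _ p := K.congr_of_eventuallyEq
    (Filter.Eventually.of_forall fun q => by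
      simp [hφ, hD, div_eq_mul_inv, Function.comp])
  rw [H.fderiv, clm_det_fin_two]
  simp only [ContinuousLinearMap.prod_apply, ContinuousLinearMap.add_apply,
    ContinuousLinearMap.smul_apply, ContinuousLinearMap.coe_comp', Function.comp_apply,
    ContinuousLinearMap.coe_fst', ContinuousLinearMap.coe_snd',
    ContinuousLinearMap.smulRight_apply, ContinuousLinearMap.one_apply,
    ContinuousLinearMap.sub_apply, ContinuousLinearMap.coe_sub', Pi.sub_apply,
    ContinuousLinearMap.zero_apply, ContinuousLinearMap.neg_apply, smul_eq_mul,
    ContinuousLinearMap.toSpanSingleton_apply, Pi.mul_apply, Pi.add_apply]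
  rw [hφ, hD, hD]
  set d : ℝ := 1 - h ^ 2 / 4 * (9 - 12 * p.1 - 36 * p.2 + 4 * p.1 ^ 2 + 12 * p.1 * p.2
      + 36 * p.2 ^ 2) with hd
  clear_value d
  norm_num
  field_simp
  subst hd
  ring
end

section
/- Let h be a real number, let D(x,y) = 1 − (h²/4)(9 − 12x − 36y + 4x² + 12xy + 36y²), and let x' = x(1 + h(x+6y−3) + (h²/4)(9−6x))/D(x,y), y' = y(1 + h(3−2x−3y) + (9h²/4)(1−2y))/D(x,y). Then for all (x,y) with D(x,y) ≠ 0 and x + 3y − 3 = 0, one has x' + 3y' − 3 = 0; i.e. the affine polynomial x + 3y − 3 is a discrete Darboux polynomial of the Kahan map and the line x + 3y = 3 is invariant. -/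
/-- The affine polynomial `x + 3y − 3` is a discrete Darboux polynomial of the
Kahan map of the ODE `ẋ = x(x+6y−3)`, `ẏ = y(−3y−2x+3)`: the line
`x + 3y = 3` is invariant under the map. -/
theorem kahan_map_invariant_line_2d
    (h x y : ℝ) (D : ℝ → ℝ → ℝ)
    (hD : ∀ a b : ℝ, D a b =
      1 - h ^ 2 / 4 * (9 - 12 * a - 36 * b + 4 * a ^ 2 + 12 * a * b + 36 * b ^ 2))
    (x' y' : ℝ)
    (hx' : x' = x * (1 + h * (x + 6 * y - 3) + h ^ 2 / 4 * (9 - 6 * x)) / D x y)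
    (hy' : y' = y * (1 + h * (3 - 2 * x - 3 * y) + 9 * h ^ 2 / 4 * (1 - 2 * y)) / D x y)
    (hD₁ : D x y ≠ 0) (hline : x + 3 * y - 3 = 0) :
    x' + 3 * y' - 3 = 0 := by
  have hx3 : x = 3 - 3 * y := by linarith
  subst hx' hy' hx3
  have hDv := hD (3 - 3 * y) y
  field_simp
  rw [show (3:ℝ) * (1 - y) = 3 - 3 * y by ring, mul_zero, mul_eq_zero]
  right
  rw [sub_eq_zero, div_eq_iff hD₁, hDv]
  ring
end

section
/- For the polynomial vector field f(x,y) = (x(x+6y−3), y(−3y−2x+3)) on ℝ², the three affine polynomials P₁ = x+3y−3, P₂ = x, P₃ = y are Darboux polynomials with cofactors C₁ = x−3y, C₂ = x+6y−3, C₃ = 3−2x−3y respectively; that is, as polynomial identities: f₁·∂P₁/∂x + f₂·∂P₁/∂y = (x−3y)(x+3y−3), f₁·∂P₂/∂x + f₂·∂P₂/∂y = (x+6y−3)·x, and f₁·∂P₃/∂x + f₂·∂P₃/∂y = (3−2x−3y)·y. -/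
open MvPolynomial

lemma pderiv_three (i : Fin 2) : pderiv i (3 : MvPolynomial (Fin 2) ℝ) = 0 := by
  rw [← map_ofNat (C : ℝ →+* MvPolynomial (Fin 2) ℝ) 3, pderiv_C]

/-- For the vector field `f(x,y) = (x(x+6y−3), y(−3y−2x+3))` on `ℝ²`, the three
affine polynomials `x+3y−3`, `x`, `y` are Darboux polynomials with cofactors
`x−3y`, `x+6y−3`, `3−2x−3y` respectively. -/
theorem affine_darboux_polynomials_of_planar_ode
    (x y f₁ f₂ : MvPolynomial (Fin 2) ℝ)
    (hx : x = X 0) (hy : y = X 1)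
    (hf₁ : f₁ = x * (x + 6 * y - 3))
    (hf₂ : f₂ = y * (-3 * y - 2 * x + 3)) :
    (f₁ * pderiv 0 (x + 3 * y - 3) + f₂ * pderiv 1 (x + 3 * y - 3)
        = (x - 3 * y) * (x + 3 * y - 3)) ∧
    (f₁ * pderiv 0 x + f₂ * pderiv 1 x = (x + 6 * y - 3) * x) ∧
    (f₁ * pderiv 0 y + f₂ * pderiv 1 y = (3 - 2 * x - 3 * y) * y) := by
  subst hx hy hf₁ hf₂
  refine ⟨?_, ?_, ?_⟩ <;>
    simp [pderiv_X, map_sub, map_add, map_mul, map_ofNat, Pi.single_apply, pderiv_three] <;> ring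
end

section
/- Let h, μ, λ, x, y, z, x', y', z' be real numbers satisfying the Kahan–Hirota–Kimura equations (x'−x)/h = (x'(y−μz) + x(y'−μz'))/2, (y'−y)/h = (y'(λz−x) + y(λz'−x'))/2, (z'−z)/h = (z'(μx−λy) + z(μx'−λy'))/2 (with h ≠ 0). Then x' + y' + z' = x + y + z; i.e. for all parameter values (μ,λ) the Kahan map of the ODE ẋ = x(y−μz), ẏ = y(λz−x), ż = z(μx−λy) preserves the first integral x + y + z. -/
/-- For all parameter values `(μ, λ)`, the Kahan map of the ODE
`ẋ = x(y−μz)`, `ẏ = y(λz−x)`, `ż = z(μx−λy)` preserves the first integral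
`x + y + z`. -/
theorem kahan_map_preserves_linear_integral_3d
    (h μ lam x y z x' y' z' : ℝ) (hh : h ≠ 0)
    (e1 : (x' - x) / h = (x' * (y - μ * z) + x * (y' - μ * z')) / 2)
    (e2 : (y' - y) / h = (y' * (lam * z - x) + y * (lam * z' - x')) / 2)
    (e3 : (z' - z) / h = (z' * (μ * x - lam * y) + z * (μ * x' - lam * y')) / 2) :
    x' + y' + z' = x + y + z := by
  field_simp at e1 e2 e3
  nlinarith [e1, e2, e3, sq_nonneg h]
end

section
/- Let h, x, y, z, x', y', z' be real numbers satisfying the Kahan–Hirota–Kimura equations with parameters (μ,λ) = (1,1) (and h ≠ 0): (x'−x)/h = (x'(y−z) + x(y'−z'))/2, (y'−y)/h = (y'(z−x) + y(z'−x'))/2, (z'−z)/h = (z'(x−y) + z(x'−y'))/2. Then, writing Q(x,y,z) = x² + y² + z² − 2xy − 2xz − 2yz, one has x'y'z'·(1 − (h²/4)Q(x,y,z)) = xyz·(1 − (h²/4)Q(x',y',z')); i.e. the rational function xyz/(1 − (h²/4)(x²+y²+z²−2xy−2xz−2yz)) is an additional first integral of the Kahan map for (μ,λ) = (1,1). -/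
set_option maxHeartbeats 4000000 in
/-- For `(μ, λ) = (1, 1)`, the rational function
`x y z / (1 − (h²/4)(x² + y² + z² − 2xy − 2xz − 2yz))` is an additional first
integral of the Kahan map of the ODE `ẋ = x(y−z)`, `ẏ = y(z−x)`, `ż = z(x−y)`
(stated in cleared-denominator form). -/
theorem kahan_map_additional_integral_mu_one_lambda_one
    (h x y z x' y' z' : ℝ) (hh : h ≠ 0)
    (e1 : (x' - x) / h = (x' * (y - z) + x * (y' - z')) / 2)
    (e2 : (y' - y) / h = (y' * (z - x) + y * (z' - x')) / 2)
    (e3 : (z' - z) / h = (z' * (x - y) + z * (x' - y')) / 2) :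
    x' * y' * z' *
        (1 - h ^ 2 / 4 *
          (x ^ 2 + y ^ 2 + z ^ 2 - 2 * x * y - 2 * x * z - 2 * y * z)) =
      x * y * z *
        (1 - h ^ 2 / 4 *
          (x' ^ 2 + y' ^ 2 + z' ^ 2 - 2 * x' * y' - 2 * x' * z' - 2 * y' * z')) := by
  have c1 : 2*(x' - x) = h * (x' * (y - z) + x * (y' - z')) := by
    have t := (div_eq_iff hh).mp e1
    linear_combination 2*t
  have c2 : 2*(y' - y) = h * (y' * (z - x) + y * (z' - x')) := by
    have t := (div_eq_iff hh).mp e2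
    linear_combination 2*t
  have c3 : 2*(z' - z) = h * (z' * (x - y) + z * (x' - y')) := by
    have t := (div_eq_iff hh).mp e3
    linear_combination 2*t
  by_cases hq : 4 - h^2*(x^2 + y^2 + z^2 - 2*x*y - 2*x*z - 2*y*z) = 0
  · linear_combination ((x'*y'*z' - ((-1)*x'*y'*y' + (-1)*x'*x'*y' + (2)*y*x'*y' + (1)*y*x'*x' + (-1)*y*y*x' + (1)*x*y'*y' + (2)*x*x'*y' + (-2)*x*y*y' + (-2)*x*y*x' + (1)*x*y*z + (1)*x*y*y + (-1)*x*x*y' + (1)*x*x*y))/4)*hq - (((2)*y'*y' + (2)*x'*y' + (-4)*y*y' + (-2)*y*x' + (2)*y*y + (-6)*x*y' + (6)*x*y + (-1)*h*z*y'*y' + (-1)*h*z*x'*y' + (1)*h*y*y'*y' + (1)*h*y*x'*y' + (2)*h*y*z*y' + (1)*h*y*z*x' + (-2)*h*y*y*y' + (-1)*h*y*y*x' + (-1)*h*y*y*z + (1)*h*y*y*y + (1)*h*x*y'*z' + (2)*h*x*y'*y' + (2)*h*x*z*y' + (2)*h*x*y*z' + (-2)*h*x*y*y' + (-2)*h*x*y*x'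 + (-1)*h*x*y*z + (-3)*h*x*x*y' + (1)*h*x*x*y + ((-1):ℝ)/2*h*h*x*y*y'*z' + ((1):ℝ)/2*h*h*x*y*y'*y' + ((3):ℝ)/2*h*h*x*y*x'*y' + ((-1):ℝ)/2*h*h*x*y*z*z' + ((-1):ℝ)/2*h*h*x*y*z*z + ((1):ℝ)/2*h*h*x*y*y*z' + (-1)*h*h*x*y*y*x' + (1)*h*h*x*y*y*z + ((-1):ℝ)/2*h*h*x*y*y*y + ((-1):ℝ)/2*h*h*x*x*y'*z' + ((1):ℝ)/2*h*h*x*x*y'*y' + ((-1):ℝ)/2*h*h*x*x*x'*y' + ((1):ℝ)/2*h*h*x*x*y*z' + (-1)*h*h*x*x*y*y' + (1)*h*h*x*x*y*z + (1)*h*h*x*x*y*y + ((-1):ℝ)/2*h*h*x*x*x*y)/4)*c1 - (((4)*x*x' + (-4)*x*x + (-1)*h*x*y'*z' + (1)*h*x*y'*y' + (-1)*h*x*x'*y' + (-1)*h*x*z*y' + (1)*h*x*y*z' + (-2)*h*x*y*x' + (1)*h*x*y*z + (-1)*h*x*y*y + (3)*h*x*x*z' + (-1)*h*x*x*y' + (1)*h*x*x*x'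 + (1)*h*x*x*z + (-1)*h*x*x*x + ((-1):ℝ)/2*h*h*x*y*y'*z' + ((1):ℝ)/2*h*h*x*y*y'*y' + ((3):ℝ)/2*h*h*x*y*x'*y' + ((-1):ℝ)/2*h*h*x*y*z*z' + ((-1):ℝ)/2*h*h*x*y*z*z + ((1):ℝ)/2*h*h*x*y*y*z' + (-1)*h*h*x*y*y*x' + (1)*h*h*x*y*y*z + ((-1):ℝ)/2*h*h*x*y*y*y + ((-1):ℝ)/2*h*h*x*x*y'*z' + ((1):ℝ)/2*h*h*x*x*y'*y' + ((-1):ℝ)/2*h*h*x*x*x'*y' + ((1):ℝ)/2*h*h*x*x*y*z' + (-1)*h*h*x*x*y*y' + (1)*h*h*x*x*y*z + (1)*h*h*x*x*y*y + ((-1):ℝ)/2*h*h*x*x*x*y)/4)*c2 - (((-2)*h*x*x'*y' + (1)*h*x*y*x' + (1)*h*x*x*y' + ((-1):ℝ)/2*h*h*x*y*y'*z' + ((1):ℝ)/2*h*h*x*y*y'*y' + ((3):ℝ)/2*h*h*x*y*x'*y' + ((-1):ℝ)/2*h*h*x*y*z*z' + ((-1):ℝ)/2*h*h*x*y*z*z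 + ((1):ℝ)/2*h*h*x*y*y*z' + (-1)*h*h*x*y*y*x' + (1)*h*h*x*y*y*z + ((-1):ℝ)/2*h*h*x*y*y*y + ((-1):ℝ)/2*h*h*x*x*y'*z' + ((1):ℝ)/2*h*h*x*x*y'*y' + ((-1):ℝ)/2*h*h*x*x*x'*y' + ((1):ℝ)/2*h*h*x*x*y*z' + (-1)*h*h*x*x*y*y' + (1)*h*h*x*x*y*z + (1)*h*h*x*x*y*y + ((-1):ℝ)/2*h*h*x*x*x*y)/4)*c3
  · have hX : (2*(4 - h^2*(x^2 + y^2 + z^2 - 2*x*y - 2*x*z - 2*y*z))) * x' = ((8)*x + (-8)*h*x*z + (8)*h*x*y + (2)*h*h*x*z*z + (4)*h*h*x*y*z + (2)*h*h*x*y*y + (-2)*h*h*x*x*x) := by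
      linear_combination ((4) + (-2)*h*z + (2)*h*y + (1)*h*h*x*z + (1)*h*h*x*y + (-1)*h*h*x*x)*c1 + ((2)*h*x + (1)*h*h*x*z + (1)*h*h*x*y + (-1)*h*h*x*x)*c2 + ((-2)*h*x + (1)*h*h*x*z + (1)*h*h*x*y + (-1)*h*h*x*x)*c3
    have hY : (2*(4 - h^2*(x^2 + y^2 + z^2 - 2*x*y - 2*x*z - 2*y*z))) * y' = ((8)*y + (8)*h*y*z + (-8)*h*x*y + (2)*h*h*y*z*z + (-2)*h*h*y*y*y + (4)*h*h*x*y*z + (2)*h*h*x*x*y) := by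
      linear_combination ((-2)*h*y + (1)*h*h*y*z + (-1)*h*h*y*y + (1)*h*h*x*y)*c1 + ((4) + (2)*h*z + (-2)*h*x + (1)*h*h*y*z + (-1)*h*h*y*y + (1)*h*h*x*y)*c2 + ((2)*h*y + (1)*h*h*y*z + (-1)*h*h*y*y + (1)*h*h*x*y)*c3
    have hZ : (2*(4 - h^2*(x^2 + y^2 + z^2 - 2*x*y - 2*x*z - 2*y*z))) * z' = ((8)*z + (-8)*h*y*z + (8)*h*x*z + (-2)*h*h*z*z*z + (2)*h*h*y*y*z + (4)*h*h*x*y*z + (2)*h*h*x*x*z) := by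
      linear_combination ((2)*h*z + (-1)*h*h*z*z + (1)*h*h*y*z + (1)*h*h*x*z)*c1 + ((-2)*h*z + (-1)*h*h*z*z + (1)*h*h*y*z + (1)*h*h*x*z)*c2 + ((4) + (-2)*h*y + (2)*h*x + (-1)*h*h*z*z + (1)*h*h*y*z + (1)*h*h*x*z)*c3
    have hD : (2*(4 - h^2*(x^2 + y^2 + z^2 - 2*x*y - 2*x*z - 2*y*z))) ≠ 0 := by
      intro hcon
      apply hq
      linarith
    have key : (2*(4 - h^2*(x^2 + y^2 + z^2 - 2*x*y - 2*x*z - 2*y*z)))^3 * (x' * y' * z' *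
        (1 - h ^ 2 / 4 *
          (x ^ 2 + y ^ 2 + z ^ 2 - 2 * x * y - 2 * x * z - 2 * y * z))) =
        (2*(4 - h^2*(x^2 + y^2 + z^2 - 2*x*y - 2*x*z - 2*y*z)))^3 * (x * y * z *
        (1 - h ^ 2 / 4 *
          (x' ^ 2 + y' ^ 2 + z' ^ 2 - 2 * x' * y' - 2 * x' * z' - 2 * y' * z'))) := by
      linear_combination (((64)*y'*z' + (-48)*h*h*z*z*y'*z' + (96)*h*h*y*z*y'*z' + (-48)*h*h*y*y*y'*z' + (96)*h*h*x*z*y'*z' + (96)*h*h*x*y*y'*z' + (-32)*h*h*x*y*z*z' + (-32)*h*h*x*y*z*y' + (16)*h*h*x*y*z*x' + (-48)*h*h*x*x*y'*z' + (16)*h*h*x*x*y*z + (-16)*h*h*h*x*x*y*z*z + (16)*h*h*h*x*x*y*y*z + (12)*h*h*h*h*z*z*z*z*y'*z' + (-48)*h*h*h*h*y*z*z*z*y'*z' + (72)*h*h*h*h*y*y*z*z*y'*z' + (-48)*h*h*h*h*y*y*y*z*y'*z' + (12)*h*h*h*h*y*y*y*y*y'*z' + (-48)*h*h*h*h*x*z*z*z*y'*z'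 + (48)*h*h*h*h*x*y*z*z*y'*z' + (16)*h*h*h*h*x*y*z*z*z*z' + (16)*h*h*h*h*x*y*z*z*z*y' + (-8)*h*h*h*h*x*y*z*z*z*x' + (48)*h*h*h*h*x*y*y*z*y'*z' + (-32)*h*h*h*h*x*y*y*z*z*z' + (-32)*h*h*h*h*x*y*y*z*z*y' + (16)*h*h*h*h*x*y*y*z*z*x' + (-48)*h*h*h*h*x*y*y*y*y'*z' + (16)*h*h*h*h*x*y*y*y*z*z' + (16)*h*h*h*h*x*y*y*y*z*y' + (-8)*h*h*h*h*x*y*y*y*z*x' + (72)*h*h*h*h*x*x*z*z*y'*z' + (48)*h*h*h*h*x*x*y*z*y'*z' + (-32)*h*h*h*h*x*x*y*z*z*z' + (-32)*h*h*h*h*x*x*y*z*z*y' + (16)*h*h*h*h*x*x*y*z*z*x' + (72)*h*h*h*h*x*x*y*y*y'*z' + (-32)*h*h*h*h*x*x*y*y*z*z' + (-32)*h*h*h*h*x*x*y*y*z*y' + (16)*h*h*h*h*x*x*y*y*z*x' + (16)*h*h*h*h*x*x*y*y*z*z + (-48)*h*h*h*h*x*x*x*z*y'*z' + (-48)*h*h*h*h*x*x*x*y*y'*z'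 + (16)*h*h*h*h*x*x*x*y*z*z' + (16)*h*h*h*h*x*x*x*y*z*y' + (-8)*h*h*h*h*x*x*x*y*z*x' + (8)*h*h*h*h*x*x*x*y*z*z + (8)*h*h*h*h*x*x*x*y*y*z + (12)*h*h*h*h*x*x*x*x*y'*z' + (-8)*h*h*h*h*x*x*x*x*y*z + (4)*h*h*h*h*h*x*x*y*z*z*z*z + (-12)*h*h*h*h*h*x*x*y*y*z*z*z + (12)*h*h*h*h*h*x*x*y*y*y*z*z + (-4)*h*h*h*h*h*x*x*y*y*y*y*z + (-8)*h*h*h*h*h*x*x*x*y*z*z*z + (8)*h*h*h*h*h*x*x*x*y*y*y*z + (4)*h*h*h*h*h*x*x*x*x*y*z*z + (-4)*h*h*h*h*h*x*x*x*x*y*y*z + (-1)*h*h*h*h*h*h*z*z*z*z*z*z*y'*z' + (6)*h*h*h*h*h*h*y*z*z*z*z*z*y'*z' + (-15)*h*h*h*h*h*h*y*y*z*z*z*z*y'*z' + (20)*h*h*h*h*h*h*y*y*y*z*z*z*y'*z' + (-15)*h*h*h*h*h*h*y*y*y*y*z*z*y'*z' + (6)*h*h*h*h*h*h*y*y*y*y*y*z*y'*z'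 + (-1)*h*h*h*h*h*h*y*y*y*y*y*y*y'*z' + (6)*h*h*h*h*h*h*x*z*z*z*z*z*y'*z' + (-18)*h*h*h*h*h*h*x*y*z*z*z*z*y'*z' + (-2)*h*h*h*h*h*h*x*y*z*z*z*z*z*z' + (-2)*h*h*h*h*h*h*x*y*z*z*z*z*z*y' + (1)*h*h*h*h*h*h*x*y*z*z*z*z*z*x' + (12)*h*h*h*h*h*h*x*y*y*z*z*z*y'*z' + (8)*h*h*h*h*h*h*x*y*y*z*z*z*z*z' + (8)*h*h*h*h*h*h*x*y*y*z*z*z*z*y' + (-4)*h*h*h*h*h*h*x*y*y*z*z*z*z*x' + (12)*h*h*h*h*h*h*x*y*y*y*z*z*y'*z' + (-12)*h*h*h*h*h*h*x*y*y*y*z*z*z*z' + (-12)*h*h*h*h*h*h*x*y*y*y*z*z*z*y' + (6)*h*h*h*h*h*h*x*y*y*y*z*z*z*x' + (-18)*h*h*h*h*h*h*x*y*y*y*y*z*y'*z' + (8)*h*h*h*h*h*h*x*y*y*y*y*z*z*z' + (8)*h*h*h*h*h*h*x*y*y*y*y*z*z*y' + (-4)*h*h*h*h*h*h*x*y*y*y*y*z*z*x'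 + (6)*h*h*h*h*h*h*x*y*y*y*y*y*y'*z' + (-2)*h*h*h*h*h*h*x*y*y*y*y*y*z*z' + (-2)*h*h*h*h*h*h*x*y*y*y*y*y*z*y' + (1)*h*h*h*h*h*h*x*y*y*y*y*y*z*x' + (-15)*h*h*h*h*h*h*x*x*z*z*z*z*y'*z' + (12)*h*h*h*h*h*h*x*x*y*z*z*z*y'*z' + (8)*h*h*h*h*h*h*x*x*y*z*z*z*z*z' + (8)*h*h*h*h*h*h*x*x*y*z*z*z*z*y' + (-4)*h*h*h*h*h*h*x*x*y*z*z*z*z*x' + (-1)*h*h*h*h*h*h*x*x*y*z*z*z*z*z + (6)*h*h*h*h*h*h*x*x*y*y*z*z*y'*z' + (-8)*h*h*h*h*h*h*x*x*y*y*z*z*z*z' + (-8)*h*h*h*h*h*h*x*x*y*y*z*z*z*y' + (4)*h*h*h*h*h*h*x*x*y*y*z*z*z*x' + (12)*h*h*h*h*h*h*x*x*y*y*y*z*y'*z' + (-8)*h*h*h*h*h*h*x*x*y*y*y*z*z*z' + (-8)*h*h*h*h*h*h*x*x*y*y*y*z*z*y' + (4)*h*h*h*h*h*h*x*x*y*y*y*z*z*x'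 + (2)*h*h*h*h*h*h*x*x*y*y*y*z*z*z + (-15)*h*h*h*h*h*h*x*x*y*y*y*y*y'*z' + (8)*h*h*h*h*h*h*x*x*y*y*y*y*z*z' + (8)*h*h*h*h*h*h*x*x*y*y*y*y*z*y' + (-4)*h*h*h*h*h*h*x*x*y*y*y*y*z*x' + (-1)*h*h*h*h*h*h*x*x*y*y*y*y*y*z + (20)*h*h*h*h*h*h*x*x*x*z*z*z*y'*z' + (12)*h*h*h*h*h*h*x*x*x*y*z*z*y'*z' + (-12)*h*h*h*h*h*h*x*x*x*y*z*z*z*z' + (-12)*h*h*h*h*h*h*x*x*x*y*z*z*z*y' + (6)*h*h*h*h*h*h*x*x*x*y*z*z*z*x' + (2)*h*h*h*h*h*h*x*x*x*y*z*z*z*z + (12)*h*h*h*h*h*h*x*x*x*y*y*z*y'*z' + (-8)*h*h*h*h*h*h*x*x*x*y*y*z*z*z' + (-8)*h*h*h*h*h*h*x*x*x*y*y*z*z*y' + (4)*h*h*h*h*h*h*x*x*x*y*y*z*z*x' + (6)*h*h*h*h*h*h*x*x*x*y*y*z*z*z + (20)*h*h*h*h*h*h*x*x*x*y*y*y*y'*z'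 + (-12)*h*h*h*h*h*h*x*x*x*y*y*y*z*z' + (-12)*h*h*h*h*h*h*x*x*x*y*y*y*z*y' + (6)*h*h*h*h*h*h*x*x*x*y*y*y*z*x' + (6)*h*h*h*h*h*h*x*x*x*y*y*y*z*z + (2)*h*h*h*h*h*h*x*x*x*y*y*y*y*z + (-15)*h*h*h*h*h*h*x*x*x*x*z*z*y'*z' + (-18)*h*h*h*h*h*h*x*x*x*x*y*z*y'*z' + (8)*h*h*h*h*h*h*x*x*x*x*y*z*z*z' + (8)*h*h*h*h*h*h*x*x*x*x*y*z*z*y' + (-4)*h*h*h*h*h*h*x*x*x*x*y*z*z*x' + (-15)*h*h*h*h*h*h*x*x*x*x*y*y*y'*z' + (8)*h*h*h*h*h*h*x*x*x*x*y*y*z*z' + (8)*h*h*h*h*h*h*x*x*x*x*y*y*z*y' + (-4)*h*h*h*h*h*h*x*x*x*x*y*y*z*x' + (-4)*h*h*h*h*h*h*x*x*x*x*y*y*z*z + (6)*h*h*h*h*h*h*x*x*x*x*x*z*y'*z' + (6)*h*h*h*h*h*h*x*x*x*x*x*y*y'*z' + (-2)*h*h*h*h*h*h*x*x*x*x*x*y*z*z'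 + (-2)*h*h*h*h*h*h*x*x*x*x*x*y*z*y' + (1)*h*h*h*h*h*h*x*x*x*x*x*y*z*x' + (-2)*h*h*h*h*h*h*x*x*x*x*x*y*z*z + (-2)*h*h*h*h*h*h*x*x*x*x*x*y*y*z + (-1)*h*h*h*h*h*h*x*x*x*x*x*x*y'*z' + (1)*h*h*h*h*h*h*x*x*x*x*x*x*y*z))*hX + (((64)*x*z' + (-64)*h*x*z*z' + (64)*h*x*y*z' + (-16)*h*h*x*z*z*z' + (64)*h*h*x*y*z*z' + (16)*h*h*x*y*z*y' + (-16)*h*h*x*y*y*z' + (16)*h*h*x*y*y*z + (64)*h*h*x*x*z*z' + (64)*h*h*x*x*y*z' + (-32)*h*h*x*x*y*z + (-48)*h*h*x*x*x*z' + (32)*h*h*h*x*z*z*z*z' + (-96)*h*h*h*x*y*z*z*z' + (96)*h*h*h*x*y*y*z*z' + (16)*h*h*h*x*y*y*z*z + (-32)*h*h*h*x*y*y*y*z' + (-64)*h*h*h*x*x*z*z*z' + (32)*h*h*h*x*x*y*z*z + (64)*h*h*h*x*x*y*y*z' + (-48)*h*h*h*x*x*y*y*z + (32)*h*h*h*x*x*x*z*z'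 + (-32)*h*h*h*x*x*x*y*z' + (-4)*h*h*h*h*x*z*z*z*z*z' + (-8)*h*h*h*h*x*y*z*z*z*y' + (8)*h*h*h*h*x*y*y*z*z*z' + (16)*h*h*h*h*x*y*y*z*z*y' + (-8)*h*h*h*h*x*y*y*y*z*y' + (8)*h*h*h*h*x*y*y*y*z*z + (-4)*h*h*h*h*x*y*y*y*y*z' + (-8)*h*h*h*h*x*y*y*y*y*z + (32)*h*h*h*h*x*x*y*z*z*z' + (16)*h*h*h*h*x*x*y*z*z*y' + (32)*h*h*h*h*x*x*y*y*z*z' + (16)*h*h*h*h*x*x*y*y*z*y' + (-16)*h*h*h*h*x*x*y*y*z*z + (8)*h*h*h*h*x*x*y*y*y*z + (24)*h*h*h*h*x*x*x*z*z*z' + (-8)*h*h*h*h*x*x*x*y*z*y' + (-16)*h*h*h*h*x*x*x*y*z*z + (24)*h*h*h*h*x*x*x*y*y*z' + (-16)*h*h*h*h*x*x*x*y*y*z + (-32)*h*h*h*h*x*x*x*x*z*z' + (-32)*h*h*h*h*x*x*x*x*y*z' + (16)*h*h*h*h*x*x*x*x*y*z + (12)*h*h*h*h*x*x*x*x*x*z'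 + (-4)*h*h*h*h*h*x*z*z*z*z*z*z' + (20)*h*h*h*h*h*x*y*z*z*z*z*z' + (-40)*h*h*h*h*h*x*y*y*z*z*z*z' + (-4)*h*h*h*h*h*x*y*y*z*z*z*z + (40)*h*h*h*h*h*x*y*y*y*z*z*z' + (8)*h*h*h*h*h*x*y*y*y*z*z*z + (-20)*h*h*h*h*h*x*y*y*y*y*z*z' + (-4)*h*h*h*h*h*x*y*y*y*y*z*z + (4)*h*h*h*h*h*x*y*y*y*y*y*z' + (16)*h*h*h*h*h*x*x*z*z*z*z*z' + (-32)*h*h*h*h*h*x*x*y*z*z*z*z' + (-8)*h*h*h*h*h*x*x*y*z*z*z*z + (36)*h*h*h*h*h*x*x*y*y*z*z*z + (32)*h*h*h*h*h*x*x*y*y*y*z*z' + (-24)*h*h*h*h*h*x*x*y*y*y*z*z + (-16)*h*h*h*h*h*x*x*y*y*y*y*z' + (12)*h*h*h*h*h*x*x*y*y*y*y*z + (-24)*h*h*h*h*h*x*x*x*z*z*z*z' + (8)*h*h*h*h*h*x*x*x*y*z*z*z' + (16)*h*h*h*h*h*x*x*x*y*z*z*z + (-8)*h*h*h*h*h*x*x*x*y*y*z*z'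 + (-12)*h*h*h*h*h*x*x*x*y*y*z*z + (24)*h*h*h*h*h*x*x*x*y*y*y*z' + (-24)*h*h*h*h*h*x*x*x*y*y*y*z + (16)*h*h*h*h*h*x*x*x*x*z*z*z' + (-8)*h*h*h*h*h*x*x*x*x*y*z*z + (-16)*h*h*h*h*h*x*x*x*x*y*y*z' + (12)*h*h*h*h*h*x*x*x*x*y*y*z + (-4)*h*h*h*h*h*x*x*x*x*x*z*z' + (4)*h*h*h*h*h*x*x*x*x*x*y*z' + (1)*h*h*h*h*h*h*x*z*z*z*z*z*z*z' + (-4)*h*h*h*h*h*h*x*y*z*z*z*z*z*z' + (1)*h*h*h*h*h*h*x*y*z*z*z*z*z*y' + (7)*h*h*h*h*h*h*x*y*y*z*z*z*z*z' + (-4)*h*h*h*h*h*h*x*y*y*z*z*z*z*y' + (-1)*h*h*h*h*h*h*x*y*y*z*z*z*z*z + (-8)*h*h*h*h*h*h*x*y*y*y*z*z*z*z' + (6)*h*h*h*h*h*h*x*y*y*y*z*z*z*y' + (2)*h*h*h*h*h*h*x*y*y*y*z*z*z*z + (7)*h*h*h*h*h*h*x*y*y*y*y*z*z*z' + (-4)*h*h*h*h*h*h*x*y*y*y*y*z*z*y'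 + (-4)*h*h*h*h*h*h*x*y*y*y*y*y*z*z' + (1)*h*h*h*h*h*h*x*y*y*y*y*y*z*y' + (-2)*h*h*h*h*h*h*x*y*y*y*y*y*z*z + (1)*h*h*h*h*h*h*x*y*y*y*y*y*y*z' + (1)*h*h*h*h*h*h*x*y*y*y*y*y*y*z + (-4)*h*h*h*h*h*h*x*x*z*z*z*z*z*z' + (4)*h*h*h*h*h*h*x*x*y*z*z*z*z*z' + (-4)*h*h*h*h*h*h*x*x*y*z*z*z*z*y' + (2)*h*h*h*h*h*h*x*x*y*z*z*z*z*z + (4)*h*h*h*h*h*h*x*x*y*y*z*z*z*y' + (4)*h*h*h*h*h*h*x*x*y*y*y*z*z*y' + (2)*h*h*h*h*h*h*x*x*y*y*y*z*z*z + (4)*h*h*h*h*h*h*x*x*y*y*y*y*z*z' + (-4)*h*h*h*h*h*h*x*x*y*y*y*y*z*y' + (-4)*h*h*h*h*h*h*x*x*y*y*y*y*z*z + (-4)*h*h*h*h*h*h*x*x*y*y*y*y*y*z' + (5)*h*h*h*h*h*h*x*x*x*z*z*z*z*z' + (8)*h*h*h*h*h*h*x*x*x*y*z*z*z*z' + (6)*h*h*h*h*h*h*x*x*x*y*z*z*z*y'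 + (-4)*h*h*h*h*h*h*x*x*x*y*z*z*z*z + (6)*h*h*h*h*h*h*x*x*x*y*y*z*z*z' + (4)*h*h*h*h*h*h*x*x*x*y*y*z*z*y' + (-10)*h*h*h*h*h*h*x*x*x*y*y*z*z*z + (8)*h*h*h*h*h*h*x*x*x*y*y*y*z*z' + (6)*h*h*h*h*h*h*x*x*x*y*y*y*z*y' + (-6)*h*h*h*h*h*h*x*x*x*y*y*y*z*z + (5)*h*h*h*h*h*h*x*x*x*y*y*y*y*z' + (-4)*h*h*h*h*h*h*x*x*x*y*y*y*y*z + (-8)*h*h*h*h*h*h*x*x*x*x*y*z*z*z' + (-4)*h*h*h*h*h*h*x*x*x*x*y*z*z*y' + (-8)*h*h*h*h*h*h*x*x*x*x*y*y*z*z' + (-4)*h*h*h*h*h*h*x*x*x*x*y*y*z*y' + (8)*h*h*h*h*h*h*x*x*x*x*y*y*z*z + (2)*h*h*h*h*h*h*x*x*x*x*y*y*y*z + (-5)*h*h*h*h*h*h*x*x*x*x*x*z*z*z' + (-4)*h*h*h*h*h*h*x*x*x*x*x*y*z*z' + (1)*h*h*h*h*h*h*x*x*x*x*x*y*z*y' +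 (4)*h*h*h*h*h*h*x*x*x*x*x*y*z*z + (-5)*h*h*h*h*h*h*x*x*x*x*x*y*y*z' + (3)*h*h*h*h*h*h*x*x*x*x*x*y*y*z + (4)*h*h*h*h*h*h*x*x*x*x*x*x*z*z' + (4)*h*h*h*h*h*h*x*x*x*x*x*x*y*z' + (-2)*h*h*h*h*h*h*x*x*x*x*x*x*y*z + (-1)*h*h*h*h*h*h*x*x*x*x*x*x*x*z'))*hY + (((64)*x*y + (64)*h*x*y*y + (-64)*h*x*x*y + (16)*h*h*x*y*z*z' + (-32)*h*h*x*y*z*z + (96)*h*h*x*y*y*z + (-16)*h*h*x*y*y*y + (96)*h*h*x*x*y*z + (-32)*h*h*x*x*y*y + (-16)*h*h*x*x*x*y + (-16)*h*h*h*x*y*y*z*z + (64)*h*h*h*x*y*y*y*z + (-32)*h*h*h*x*y*y*y*y + (16)*h*h*h*x*x*y*z*z + (32)*h*h*h*x*x*y*y*y + (-64)*h*h*h*x*x*x*y*z + (-32)*h*h*h*x*x*x*y*y + (32)*h*h*h*x*x*x*x*y + (-8)*h*h*h*h*x*y*z*z*z*z' + (4)*h*h*h*h*x*y*z*z*z*z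 + (16)*h*h*h*h*x*y*y*z*z*z' + (-24)*h*h*h*h*x*y*y*z*z*z + (-8)*h*h*h*h*x*y*y*y*z*z' + (40)*h*h*h*h*x*y*y*y*z*z + (-16)*h*h*h*h*x*y*y*y*y*z + (-4)*h*h*h*h*x*y*y*y*y*y + (16)*h*h*h*h*x*x*y*z*z*z' + (-24)*h*h*h*h*x*x*y*z*z*z + (16)*h*h*h*h*x*x*y*y*z*z' + (64)*h*h*h*h*x*x*y*y*z*z + (-16)*h*h*h*h*x*x*y*y*y*z + (16)*h*h*h*h*x*x*y*y*y*y + (-8)*h*h*h*h*x*x*x*y*z*z' + (40)*h*h*h*h*x*x*x*y*z*z + (-16)*h*h*h*h*x*x*x*y*y*z + (-24)*h*h*h*h*x*x*x*y*y*y + (-16)*h*h*h*h*x*x*x*x*y*z + (16)*h*h*h*h*x*x*x*x*y*y + (-4)*h*h*h*h*x*x*x*x*x*y + (-8)*h*h*h*h*h*x*y*y*y*z*z*z + (20)*h*h*h*h*h*x*y*y*y*y*z*z + (-16)*h*h*h*h*h*x*y*y*y*y*y*z + (4)*h*h*h*h*h*x*y*y*y*y*y*y + (20)*h*h*h*h*h*x*x*y*y*y*z*z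 + (-4)*h*h*h*h*h*x*x*y*y*y*y*y + (8)*h*h*h*h*h*x*x*x*y*z*z*z + (-20)*h*h*h*h*h*x*x*x*y*y*z*z + (-8)*h*h*h*h*h*x*x*x*y*y*y*y + (-20)*h*h*h*h*h*x*x*x*x*y*z*z + (8)*h*h*h*h*h*x*x*x*x*y*y*y + (16)*h*h*h*h*h*x*x*x*x*x*y*z + (4)*h*h*h*h*h*x*x*x*x*x*y*y + (-4)*h*h*h*h*h*x*x*x*x*x*x*y + (1)*h*h*h*h*h*h*x*y*z*z*z*z*z*z' + (-4)*h*h*h*h*h*h*x*y*y*z*z*z*z*z' + (6)*h*h*h*h*h*h*x*y*y*y*z*z*z*z' + (-1)*h*h*h*h*h*h*x*y*y*y*z*z*z*z + (-4)*h*h*h*h*h*h*x*y*y*y*y*z*z*z' + (2)*h*h*h*h*h*h*x*y*y*y*y*z*z*z + (1)*h*h*h*h*h*h*x*y*y*y*y*y*z*z' + (-2)*h*h*h*h*h*h*x*y*y*y*y*y*y*z + (1)*h*h*h*h*h*h*x*y*y*y*y*y*y*y + (-4)*h*h*h*h*h*h*x*x*y*z*z*z*z*z' + (4)*h*h*h*h*h*h*x*x*y*y*z*z*z*z'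 + (2)*h*h*h*h*h*h*x*x*y*y*z*z*z*z + (4)*h*h*h*h*h*h*x*x*y*y*y*z*z*z' + (-2)*h*h*h*h*h*h*x*x*y*y*y*z*z*z + (-4)*h*h*h*h*h*h*x*x*y*y*y*y*z*z' + (4)*h*h*h*h*h*h*x*x*y*y*y*y*z*z + (-2)*h*h*h*h*h*h*x*x*y*y*y*y*y*z + (-2)*h*h*h*h*h*h*x*x*y*y*y*y*y*y + (6)*h*h*h*h*h*h*x*x*x*y*z*z*z*z' + (-1)*h*h*h*h*h*h*x*x*x*y*z*z*z*z + (4)*h*h*h*h*h*h*x*x*x*y*y*z*z*z' + (-2)*h*h*h*h*h*h*x*x*x*y*y*z*z*z + (6)*h*h*h*h*h*h*x*x*x*y*y*y*z*z' + (-8)*h*h*h*h*h*h*x*x*x*y*y*y*z*z + (4)*h*h*h*h*h*h*x*x*x*y*y*y*y*z + (-1)*h*h*h*h*h*h*x*x*x*y*y*y*y*y + (-4)*h*h*h*h*h*h*x*x*x*x*y*z*z*z' + (2)*h*h*h*h*h*h*x*x*x*x*y*z*z*z + (-4)*h*h*h*h*h*h*x*x*x*x*y*y*z*z' + (4)*h*h*h*h*h*h*x*x*x*x*y*y*z*z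 + (4)*h*h*h*h*h*h*x*x*x*x*y*y*y*z + (4)*h*h*h*h*h*h*x*x*x*x*y*y*y*y + (1)*h*h*h*h*h*h*x*x*x*x*x*y*z*z' + (-2)*h*h*h*h*h*h*x*x*x*x*x*y*y*z + (-1)*h*h*h*h*h*h*x*x*x*x*x*y*y*y + (-2)*h*h*h*h*h*h*x*x*x*x*x*x*y*z + (-2)*h*h*h*h*h*h*x*x*x*x*x*x*y*y + (1)*h*h*h*h*h*h*x*x*x*x*x*x*x*y))*hZ
    exact mul_left_cancel₀ (pow_ne_zero 3 hD) key
end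

section
/- Let h, x, y, z, x', y', z' be real numbers satisfying the Kahan–Hirota–Kimura equations with parameters (μ,λ) = (1,0) (and h ≠ 0): (x'−x)/h = (x'(y−z) + x(y'−z'))/2, (y'−y)/h = −(y'x + yx')/2, (z'−z)/h = (z'x + zx')/2. Then y'z'·(4 − h²x²) = yz·(4 − h²x'²); i.e. the rational function yz/(1 − (h²/4)x²) is an additional first integral of the Kahan map for (μ,λ) = (1,0). -/
/-- For `(μ, λ) = (1, 0)`, the rational function `y z / (1 − (h²/4) x²)` is an
additional first integral of the Kahan map of the ODE `ẋ = x(y−z)`, `ẏ = −yx`,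
`ż = zx` (stated in cleared-denominator form). -/
theorem kahan_map_additional_integral_mu_one_lambda_zero
    (h x y z x' y' z' : ℝ) (hh : h ≠ 0)
    (e1 : (x' - x) / h = (x' * (y - z) + x * (y' - z')) / 2)
    (e2 : (y' - y) / h = -(y' * x + y * x') / 2)
    (e3 : (z' - z) / h = (z' * x + z * x') / 2) :
    y' * z' * (4 - h ^ 2 * x ^ 2) = y * z * (4 - h ^ 2 * x' ^ 2) := by
  have h2 : y' * (2 + h * x) = y * (2 - h * x') := by
    field_simp at e2; nlinarith [e2]
  have h3 : z' * (2 - h * x) = z * (2 + h * x') := by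
    field_simp at e3; nlinarith [e3]
  nlinarith [congrArg₂ (· * ·) h2 h3, sq_nonneg h]
end

section
/- Let h, x, y, z, x', y', z' be real numbers satisfying the Kahan–Hirota–Kimura equations with parameters (μ,λ) = (−1,0) (and h ≠ 0): (x'−x)/h = (x'(y+z) + x(y'+z'))/2, (y'−y)/h = −(y'x + yx')/2, (z'−z)/h = −(z'x + zx')/2. If moreover 2 + hx ≠ 0, then y'·z = y·z'; i.e. the rational function y/z is an additional first integral of the Kahan map for (μ,λ) = (−1,0). -/
/-- For `(μ, λ) = (−1, 0)`, the rational function `y / z` is an additional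
first integral of the Kahan map of the ODE `ẋ = x(y+z)`, `ẏ = −yx`, `ż = −zx`
(stated in cleared-denominator form). -/
theorem kahan_map_additional_integral_mu_neg_one_lambda_zero
    (h x y z x' y' z' : ℝ) (hh : h ≠ 0)
    (e1 : (x' - x) / h = (x' * (y + z) + x * (y' + z')) / 2)
    (e2 : (y' - y) / h = -(y' * x + y * x') / 2)
    (e3 : (z' - z) / h = -(z' * x + z * x') / 2)
    (hden : 2 + h * x ≠ 0) :
    y' * z = y * z' := by
  have h2 : y' * (2 + h * x) = y * (2 - h * x') := by
    field_simp at e2; linarith [e2]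
  have h3 : z' * (2 + h * x) = z * (2 - h * x') := by
    field_simp at e3; linarith [e3]
  have key : (y' * z - y * z') * (2 + h * x) = 0 := by linear_combination z * h2 - y * h3
  rcases mul_eq_zero.mp key with hk | hk
  · linarith
  · exact absurd hk hden
end
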